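/- The vector-valued rational function Y₃(z) = Σ_{k=1}^{3} m_k/(z − z_k) satisfies the KZ system with ρ = −1, i.e. Y₃'(z) = −A(z)·Y₃(z) for all z ∈ ℂ ∖ {z₁, z₂, z₃}. -/

import Mathlib

noncomputable section
open Matrix Polynomial

/-- The 4×4 permutation matrix (over ℂ) of the transposition exchanging coordinates `i` and `j`. -/
def permMat (i j : Fin 4) : Matrix (Fin 4) (Fin 4) ℂ :=
  Matrix.of fun k l => if l = Equiv.swap i j k then 1 else 0

/-- `P₁ = P(1,2)`. -/
def P1 : Matrix (Fin 4) (Fin 4) ℂ := permMat 0 1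
/-- `P₂ = P(1,3)`. -/
def P2 : Matrix (Fin 4) (Fin 4) ℂ := permMat 0 2
/-- `P₃ = P(1,4)`. -/
def P3 : Matrix (Fin 4) (Fin 4) ℂ := permMat 0 3

/-- `A(z) = Σ_{k=1}^{3} P_k/(z − z_k)`. -/
def Amat (z₁ z₂ z₃ z : ℂ) : Matrix (Fin 4) (Fin 4) ℂ :=
  (z - z₁)⁻¹ • P1 + (z - z₂)⁻¹ • P2 + (z - z₃)⁻¹ • P3

/-- `m₁ = β₁·(0,0,1,a)ᵀ` with `a = −β₁/β₃`. -/
def mv1 (z₁ z₂ z₃ : ℂ) : Fin 4 → ℂ := (z₂ - z₃) • ![0, 0, 1, -(z₂ - z₃) / (z₁ - z₂)]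
/-- `m₂ = β₂·(0,b,0,c)ᵀ` with `b = −β₃/β₂`, `c = β₁²/(β₂β₃)`. -/
def mv2 (z₁ z₂ z₃ : ℂ) : Fin 4 → ℂ :=
  (z₃ - z₁) • ![0, -(z₁ - z₂) / (z₃ - z₁), 0, (z₂ - z₃) ^ 2 / ((z₃ - z₁) * (z₁ - z₂))]
/-- `m₃ = β₃·(0,1,a,0)ᵀ`. -/
def mv3 (z₁ z₂ z₃ : ℂ) : Fin 4 → ℂ := (z₁ - z₂) • ![0, 1, -(z₂ - z₃) / (z₁ - z₂), 0]
/-- `Y₃(z) = Σ_{k=1}^{3} m_k/(z − z_k)`. -/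
def Y3 (z₁ z₂ z₃ z : ℂ) : Fin 4 → ℂ :=
  (z - z₁)⁻¹ • mv1 z₁ z₂ z₃ + (z - z₂)⁻¹ • mv2 z₁ z₂ z₃ + (z - z₃)⁻¹ • mv3 z₁ z₂ z₃

set_option maxHeartbeats 1000000 in
lemma P1_eq : P1 = !![0,1,0,0; 1,0,0,0; 0,0,1,0; 0,0,0,1] := by
  ext i j; fin_cases i <;> fin_cases j <;>
    simp [P1, permMat, Equiv.swap_apply_def, Matrix.vecHead, Matrix.vecTail] <;>
    decide

set_option maxHeartbeats 1000000 in
lemma P2_eq : P2 = !![0,0,1,0; 0,1,0,0; 1,0,0,0; 0,0,0,1] := by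
  ext i j; fin_cases i <;> fin_cases j <;>
    simp [P2, permMat, Equiv.swap_apply_def, Matrix.vecHead, Matrix.vecTail] <;>
    decide

set_option maxHeartbeats 1000000 in
lemma P3_eq : P3 = !![0,0,0,1; 0,1,0,0; 0,0,1,0; 1,0,0,0] := by
  ext i j; fin_cases i <;> fin_cases j <;>
    simp [P3, permMat, Equiv.swap_apply_def, Matrix.vecHead, Matrix.vecTail] <;>
    decide

lemma mv1_eq (z₁ z₂ z₃ : ℂ) :
    mv1 z₁ z₂ z₃ = ![0, 0, z₂ - z₃, -(z₂ - z₃) ^ 2 / (z₁ - z₂)] := by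
  funext i; fin_cases i <;>
    simp [mv1, Matrix.vecHead, Matrix.vecTail] <;> ring

lemma mv2_eq (z₁ z₂ z₃ : ℂ) (h31 : z₃ - z₁ ≠ 0) :
    mv2 z₁ z₂ z₃ = ![0, -(z₁ - z₂), 0, (z₂ - z₃) ^ 2 / (z₁ - z₂)] := by
  funext i; fin_cases i <;>
    simp [mv2, Matrix.vecHead, Matrix.vecTail]
  · field_simp
  · rw [mul_div_assoc']; exact mul_div_mul_left _ _ h31

lemma mv3_eq (z₁ z₂ z₃ : ℂ) (h12 : z₁ - z₂ ≠ 0) :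
    mv3 z₁ z₂ z₃ = ![0, z₁ - z₂, -(z₂ - z₃), 0] := by
  funext i; fin_cases i <;>
    simp [mv3, Matrix.vecHead, Matrix.vecTail] <;> field_simp

set_option maxHeartbeats 2000000 in
/-- `Y₃` satisfies `Y₃' = −A·Y₃` on `ℂ ∖ {z₁,z₂,z₃}`. -/
theorem stmt_2 (z₁ z₂ z₃ : ℂ) (h12 : z₁ ≠ z₂) (h13 : z₁ ≠ z₃) (h23 : z₂ ≠ z₃) :
    ∀ z : ℂ, z ≠ z₁ → z ≠ z₂ → z ≠ z₃ →
      HasDerivAt (fun w => Y3 z₁ z₂ z₃ w) (-(Amat z₁ z₂ z₃ z *ᵥ Y3 z₁ z₂ z₃ z)) z := by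
  intro z hz1 hz2 hz3
  have d1 : HasDerivAt (fun w : ℂ => (w - z₁)⁻¹) (-1 / (z - z₁) ^ 2) z :=
    ((hasDerivAt_id z).sub_const z₁).inv (sub_ne_zero.2 hz1)
  have d2 : HasDerivAt (fun w : ℂ => (w - z₂)⁻¹) (-1 / (z - z₂) ^ 2) z :=
    ((hasDerivAt_id z).sub_const z₂).inv (sub_ne_zero.2 hz2)
  have d3 : HasDerivAt (fun w : ℂ => (w - z₃)⁻¹) (-1 / (z - z₃) ^ 2) z :=
    ((hasDerivAt_id z).sub_const z₃).inv (sub_ne_zero.2 hz3)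
  have D := ((d1.smul_const (mv1 z₁ z₂ z₃)).add (d2.smul_const (mv2 z₁ z₂ z₃))).add
      (d3.smul_const (mv3 z₁ z₂ z₃))
  refine D.congr_deriv ?_
  have h12' := sub_ne_zero.2 h12
  have h31' := sub_ne_zero.2 h13.symm
  have h23' := sub_ne_zero.2 h23
  have hz1' := sub_ne_zero.2 hz1
  have hz2' := sub_ne_zero.2 hz2
  have hz3' := sub_ne_zero.2 hz3
  funext i
  fin_cases i <;>
    simp only [Y3, Amat, mv1_eq z₁ z₂ z₃, mv2_eq z₁ z₂ z₃ h31', mv3_eq z₁ z₂ z₃ h12',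
      P1_eq, P2_eq, P3_eq, Matrix.add_mulVec, Matrix.smul_mulVec, Pi.add_apply,
      Pi.smul_apply, Pi.neg_apply, smul_eq_mul, Matrix.mulVec, dotProduct,
      Fin.sum_univ_four, Matrix.cons_val_zero, Matrix.cons_val_one, Matrix.head_cons,
      Matrix.cons_val', Matrix.cons_val_fin_one, Matrix.empty_val', Matrix.head_fin_const,
      Matrix.vecHead, Matrix.vecTail, Fin.isValue, Function.comp_apply,
      mul_zero, zero_mul, add_zero, zero_add, mul_one, one_mul, neg_zero, mul_neg, neg_neg,
      Fin.reduceFinMk, Matrix.of_apply, Matrix.smul_apply, Matrix.cons_val] <;>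
    field_simp <;>
    (try ring1) <;>
    (rw [div_eq_iff (by apply_rules [mul_ne_zero, h12', h31', h23', hz1', hz2', hz3'])]; ring)
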